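/- Fix integers k, m ≥ 1, a real λ with 1/2 < λ ≤ 1, and ε > 0. There exists n₀ such that for all n ≥ n₀ the following holds: let Σ = (a_1, …, a_n) be a sequence in ℤ^k with every entry in [0, M]^k such that e^m_Σ(A₁) ≠ e^m_Σ(A₂) for all distinct A₁, A₂ ∈ F_{λ,n} with |A₁|, |A₂| ≥ m. Let A be uniform on F_{λ,n}, X = e^m_Σ(A) ∈ ℤ^k, μ = E[X], and σ² = E[‖X − μ‖²]. Then σ² ≤ (1 + ε) · k(2m²λ^{2m−1} + 2m²λ^{2m} + 1) · n^{2m−1} · M^{2m} / (m!)². -/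

import Mathlib

open Finset in
lemma card_filter_superset {n : ℕ} (S : Finset (Fin n)) :
    ((Finset.univ : Finset (Finset (Fin n))).filter (fun A => S ⊆ A)).card
      = 2 ^ (n - S.card) := by
  rw [show (2:ℕ) ^ (n - S.card) = Sᶜ.powerset.card by
    rw [card_powerset, card_compl, Fintype.card_fin]]
  apply card_nbij' (fun A => A \ S) (fun B => B ∪ S)
  · intro A hA
    simp only [mem_coe, mem_powerset]
    intro x hx
    simp only [mem_sdiff] at hx
    simp [mem_compl, hx.2]
  · intro B hB
    simp
  · intro A hA
    simp only [mem_coe, mem_filter, mem_univ, true_and] at hA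
    exact sdiff_union_of_subset hA
  · intro B hB
    simp only [mem_coe, mem_powerset] at hB
    have : Disjoint S B := by
      rw [disjoint_left]; intro x hxS hxB
      have := hB hxB; simp [mem_compl] at this; exact this hxS
    ext x
    simp only [mem_sdiff, mem_union]
    constructor
    · rintro ⟨h1 | h1, h2⟩
      · exact h1
      · exact absurd h1 h2
    · intro h; exact ⟨Or.inl h, fun hS => (disjoint_left.mp this hS) h⟩

open Finset in
lemma card_filter_superset_pc {n m : ℕ} (R : Finset (Fin n)) :
    (((Finset.univ : Finset (Fin n)).powersetCard m).filter (fun S => R ⊆ S)).card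
      ≤ (n - R.card).choose (m - R.card) := by
  rw [show (n - R.card).choose (m - R.card) = (Rᶜ.powersetCard (m - R.card)).card by
    rw [card_powersetCard, card_compl, Fintype.card_fin]]
  apply card_le_card_of_injOn (fun S => S \ R)
  · intro S hS
    simp only [mem_coe, mem_filter, mem_powersetCard] at hS
    obtain ⟨⟨-, hcard⟩, hRS⟩ := hS
    rw [mem_coe, mem_powersetCard]
    constructor
    · intro x hx; simp only [mem_sdiff] at hx; simp [mem_compl, hx.2]
    · rw [card_sdiff_of_subset hRS, hcard]
  · intro S1 h1 S2 h2 heq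
    simp only [coe_filter, Set.mem_setOf_eq, mem_powersetCard] at h1 h2
    have e1 := sdiff_union_of_subset h1.2
    have e2 := sdiff_union_of_subset h2.2
    rw [← e1, ← e2]
    simp only at heq
    rw [heq]

open Finset in
lemma card_filter_superset' {n : ℕ} (S : Finset (Fin n)) :
    (((Finset.univ : Finset (Finset (Fin n))).filter (fun A => S ⊆ A)).card : ℝ)
      = 2 ^ n / 2 ^ S.card := by
  rw [card_filter_superset, eq_div_iff (by positivity)]
  have hle : S.card ≤ n := by
    simpa using card_le_card (subset_univ S)
  push_cast
  rw [← pow_add]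
  congr 1
  omega

open Finset in
lemma sum_sq_dev_le {α : Type*} (s : Finset α) (hs : 0 < (s.card : ℝ)) (f : α → ℝ) (c : ℝ) :
    ∑ x ∈ s, (f x - (∑ y ∈ s, f y) / s.card) ^ 2 ≤ ∑ x ∈ s, (f x - c) ^ 2 := by
  set μ := (∑ y ∈ s, f y) / s.card with hμ
  have hsum : ∑ y ∈ s, f y = μ * s.card := by
    rw [hμ, div_mul_cancel₀ _ hs.ne']
  have h1 : ∑ x ∈ s, ((f x - c) ^ 2 - (f x - μ) ^ 2)
      = 2 * (μ - c) * (∑ x ∈ s, f x) - (s.card : ℝ) * ((μ - c) * (μ + c)) := by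
    rw [Finset.sum_congr rfl (fun x _ => show (f x - c) ^ 2 - (f x - μ) ^ 2
        = 2 * (μ - c) * f x - (μ - c) * (μ + c) from by ring)]
    rw [Finset.sum_sub_distrib, ← Finset.mul_sum, Finset.sum_const, nsmul_eq_mul]
  have h2 : ∑ x ∈ s, ((f x - c) ^ 2 - (f x - μ) ^ 2) = (s.card : ℝ) * (μ - c) ^ 2 := by
    rw [h1, hsum]; ring
  have h3 : (0:ℝ) ≤ (s.card : ℝ) * (μ - c) ^ 2 := mul_nonneg (Nat.cast_nonneg _) (sq_nonneg _)
  rw [Finset.sum_sub_distrib] at h2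
  linarith

open Finset in
lemma fact_aux (m : ℕ) : ∀ j, 1 ≤ j → j ≤ m →
    (m-1).factorial ≤ m^(j-1) * (m-j).factorial := by
  intro j
  induction j with
  | zero => omega
  | succ i IH =>
    intro _ him
    by_cases hi : 1 ≤ i
    · have IH' := IH hi (by omega)
      have h1 : (m-i) * (m-(i+1)).factorial = (m-i).factorial := by
        rw [show m - (i+1) = (m-i) - 1 from by omega]
        exact Nat.mul_factorial_pred (by omega)
      calc (m-1).factorial ≤ m^(i-1) * (m-i).factorial := IH'
        _ = m^(i-1) * ((m-i) * (m-(i+1)).factorial) := by rw [h1]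
        _ ≤ m^(i-1) * (m * (m-(i+1)).factorial) := by
            apply Nat.mul_le_mul_left
            apply Nat.mul_le_mul_right
            omega
        _ = m^((i+1)-1) * (m-(i+1)).factorial := by
            rw [show (i+1)-1 = (i-1)+1 from by omega, pow_succ]
            ring
    · have hi0 : i = 0 := by omega
      subst hi0
      simp

lemma nat_main (n m j : ℕ) (hm : 1 ≤ m) (hj1 : 1 ≤ j) (hjm : j ≤ m) (hmn : m ≤ n) :
    n.choose j * ((n-j).choose (m-j))^2 * ((m-1).factorial)^2 * n^(j-1)
      ≤ n^(2*m-1) * m^(2*(j-1)) := by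
  have e1 : n.choose j ≤ n^j := Nat.choose_le_pow n j
  have e2 : (n-j).choose (m-j) * (m-j).factorial ≤ n^(m-j) := by
    rw [mul_comm, ← Nat.descFactorial_eq_factorial_mul_choose]
    exact (Nat.descFactorial_le_pow _ _).trans (Nat.pow_le_pow_left (Nat.sub_le n j) _)
  have e3 := fact_aux m j hj1 hjm
  have e4 : (n-j).choose (m-j) * (m-1).factorial ≤ m^(j-1) * n^(m-j) := by
    calc (n-j).choose (m-j) * (m-1).factorial
        ≤ (n-j).choose (m-j) * (m^(j-1) * (m-j).factorial) := Nat.mul_le_mul_left _ e3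
      _ = m^(j-1) * ((n-j).choose (m-j) * (m-j).factorial) := by ring
      _ ≤ m^(j-1) * n^(m-j) := Nat.mul_le_mul_left _ e2
  calc n.choose j * ((n-j).choose (m-j))^2 * ((m-1).factorial)^2 * n^(j-1)
      = n.choose j * ((n-j).choose (m-j) * (m-1).factorial)^2 * n^(j-1) := by ring
    _ ≤ n^j * (m^(j-1) * n^(m-j))^2 * n^(j-1) :=
        Nat.mul_le_mul (Nat.mul_le_mul e1 (Nat.pow_le_pow_left e4 2)) (le_refl _)
    _ = m^((j-1)*2) * n^(j + (m-j)*2 + (j-1)) := by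
        rw [mul_pow, ← pow_mul, ← pow_mul, pow_add, pow_add]
        ring
    _ = n^(2*m-1) * m^(2*(j-1)) := by
        rw [show (j-1)*2 = 2*(j-1) from by omega,
          show j + (m-j)*2 + (j-1) = 2*m-1 from by omega]
        ring

open Finset in
lemma key_bound (n m : ℕ) (hm : 1 ≤ m) (h2m : 2*m ≤ n) (hm3 : m^3 ≤ n) (Mr : ℝ)
    (b : Fin n → ℝ) (hb0 : ∀ i, 0 ≤ b i) (hbM : ∀ i, b i ≤ Mr) :
    ∑ A ∈ (univ : Finset (Finset (Fin n))),
      ((∑ S ∈ A.powersetCard m, ∏ i ∈ S, b i) -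
        (∑ B ∈ (univ : Finset (Finset (Fin n))), ∑ S ∈ B.powersetCard m, ∏ i ∈ S, b i)
          / (2:ℝ) ^ n) ^ 2
    ≤ (2:ℝ) ^ n / 4 ^ m *
        (2 * (m:ℝ)^2 * (n:ℝ)^(2*m-1) * Mr^(2*m) / (m.factorial : ℝ)^2) := by
  have hn0 : 0 < n := by nlinarith [Nat.one_le_iff_ne_zero.mp hm]
  have hMr : 0 ≤ Mr := le_trans (hb0 ⟨0, hn0⟩) (hbM ⟨0, hn0⟩)
  set W : Finset (Finset (Fin n)) := (univ : Finset (Fin n)).powersetCard m with hW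
  set w : Finset (Fin n) → ℝ := fun S => ∏ i ∈ S, b i with hw
  set F : Finset (Fin n) → ℝ := fun A => ∑ S ∈ W, if S ⊆ A then w S else 0 with hFdef
  set G : Finset (Fin n) → ℝ := fun R => ∑ S ∈ W, if R ⊆ S then w S else 0 with hGdef
  have hw0 : ∀ S, 0 ≤ w S := fun S => prod_nonneg (fun i _ => hb0 i)
  have hwM : ∀ S ∈ W, w S ≤ Mr ^ m := by
    intro S hS
    have hcard : S.card = m := (mem_powersetCard.mp hS).2
    calc w S ≤ ∏ _i ∈ S, Mr := prod_le_prod (fun i _ => hb0 i) (fun i _ => hbM i)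
    _ = Mr ^ m := by rw [prod_const, hcard]
  have hcardW : ∀ S ∈ W, S.card = m := fun S hS => (mem_powersetCard.mp hS).2
  -- F A is the evaluation
  have hF : ∀ A : Finset (Fin n), (∑ S ∈ A.powersetCard m, ∏ i ∈ S, b i) = F A := by
    intro A
    have : A.powersetCard m = W.filter (fun S => S ⊆ A) := by
      ext S
      simp only [mem_powersetCard, mem_filter, hW, subset_univ, true_and]
      tauto
    rw [this, sum_filter]
  -- step 1
  have step1 : ∑ A ∈ (univ : Finset (Finset (Fin n))), F A
      = 2 ^ n / 2 ^ m * ∑ S ∈ W, w S := by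
    rw [hFdef]
    rw [Finset.sum_comm]
    rw [Finset.mul_sum]
    apply Finset.sum_congr rfl
    intro S hS
    rw [← Finset.sum_filter, Finset.sum_const, nsmul_eq_mul, card_filter_superset' S,
      hcardW S hS]
  -- step 2
  have step2 : ∑ A ∈ (univ : Finset (Finset (Fin n))), (F A) ^ 2
      = ∑ S ∈ W, ∑ T ∈ W, (w S * w T) * (2 ^ n * 2 ^ ((S ∩ T).card) / 4 ^ m) := by
    have expand : ∀ A : Finset (Fin n), (F A) ^ 2
        = ∑ S ∈ W, ∑ T ∈ W, if S ∪ T ⊆ A then w S * w T else 0 := by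
      intro A
      rw [hFdef, sq]
      simp only
      rw [Finset.sum_mul_sum]
      apply Finset.sum_congr rfl; intro S _
      apply Finset.sum_congr rfl; intro T _
      by_cases h1 : S ⊆ A <;> by_cases h2 : T ⊆ A <;>
        simp [h1, h2, union_subset_iff]
    rw [Finset.sum_congr rfl (fun A _ => expand A)]
    rw [Finset.sum_comm]
    apply Finset.sum_congr rfl; intro S hS
    rw [Finset.sum_comm]
    apply Finset.sum_congr rfl; intro T hT
    rw [← Finset.sum_filter, Finset.sum_const, nsmul_eq_mul, card_filter_superset' (S ∪ T)]
    have hiu : (2:ℝ) ^ ((S ∩ T).card) * 2 ^ ((S ∪ T).card) = 4 ^ m := by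
      rw [← pow_add]
      rw [show (S ∩ T).card + (S ∪ T).card = 2 * m by
        rw [card_inter_add_card_union, hcardW S hS, hcardW T hT]; ring]
      rw [show (4:ℝ) = 2^2 by norm_num, ← pow_mul]
    have heq : (2:ℝ)^n / 2^((S ∪ T).card) = 2^n * 2^((S ∩ T).card) / 4^m := by
      rw [div_eq_div_iff (by positivity) (by positivity), ← hiu]; ring
    rw [heq]; ring
  -- step 3: variance identity
  have hcard2 : (((univ : Finset (Finset (Fin n)))).card : ℝ) = 2 ^ n := by
    rw [card_univ, Fintype.card_finset, Fintype.card_fin]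
    push_cast; ring
  set C : ℝ := (∑ B ∈ (univ : Finset (Finset (Fin n))), F B) / 2 ^ n with hC
  have step3 : ∑ A ∈ (univ : Finset (Finset (Fin n))), (F A - C) ^ 2
      = (∑ A ∈ (univ : Finset (Finset (Fin n))), (F A)^2)
        - (∑ A ∈ (univ : Finset (Finset (Fin n))), F A)^2 / 2^n := by
    calc ∑ A ∈ (univ : Finset (Finset (Fin n))), (F A - C) ^ 2
        = ∑ A ∈ (univ : Finset (Finset (Fin n))), ((F A)^2 - 2*C*F A + C^2) :=
          Finset.sum_congr rfl (fun A _ => by ring)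
      _ = (∑ A ∈ (univ : Finset (Finset (Fin n))), (F A)^2)
            - 2*C*(∑ A ∈ (univ : Finset (Finset (Fin n))), F A)
            + ((univ : Finset (Finset (Fin n))).card : ℝ) * C^2 := by
          rw [Finset.sum_add_distrib, Finset.sum_sub_distrib, ← Finset.mul_sum,
            Finset.sum_const, nsmul_eq_mul]
      _ = _ := by
          rw [hcard2, hC]
          field_simp
          ring
  -- step 4
  have hsq : ((∑ A ∈ (univ : Finset (Finset (Fin n))), F A))^2 / 2^n
      = ∑ S ∈ W, ∑ T ∈ W, (w S * w T) * (2^n / 4^m) := by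
    rw [step1]
    have hc' : ((2:ℝ)^n/2^m)^2/2^n = 2^n/4^m := by
      rw [div_pow, show ((2:ℝ)^m)^2 = 4^m from by rw [← pow_mul, mul_comm, pow_mul]; norm_num]
      rw [div_eq_div_iff (by positivity) (by positivity), ← sq]
      field_simp
    calc ((2:ℝ)^n/2^m * ∑ S ∈ W, w S)^2 / 2^n
        = (((2:ℝ)^n/2^m)^2/2^n) * ((∑ S ∈ W, w S) * (∑ T ∈ W, w T)) := by ring
      _ = (2^n/4^m) * ((∑ S ∈ W, w S) * (∑ T ∈ W, w T)) := by rw [hc']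
      _ = ∑ S ∈ W, ∑ T ∈ W, (w S * w T) * (2^n/4^m) := by
          rw [Finset.sum_mul_sum, Finset.mul_sum]
          apply Finset.sum_congr rfl; intro S _
          rw [Finset.mul_sum]
          apply Finset.sum_congr rfl; intro T _
          ring
  have step4 : ∑ A ∈ (univ : Finset (Finset (Fin n))), (F A - C) ^ 2
      = (2:ℝ)^n / 4^m *
        ∑ R ∈ (univ : Finset (Finset (Fin n))), (if R = ∅ then 0 else (G R)^2) := by
    rw [step3, step2, hsq, ← Finset.sum_sub_distrib]
    have hinner : ∀ S ∈ W, ∀ T ∈ W,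
        (w S * w T) * (2^n * 2^((S ∩ T).card) / 4^m) - (w S * w T) * (2^n / 4^m)
        = (2:ℝ)^n/4^m * ((w S * w T) * ((2:ℝ)^((S ∩ T).card) - 1)) := by
      intro S _ T _; ring
    calc ∑ S ∈ W, (∑ T ∈ W, w S * w T * (2 ^ n * 2 ^ #(S ∩ T) / 4 ^ m)
            - ∑ T ∈ W, w S * w T * (2 ^ n / 4 ^ m))
        = ∑ S ∈ W, ∑ T ∈ W, (2:ℝ)^n/4^m * ((w S * w T) * ((2:ℝ)^((S ∩ T).card) - 1)) := by
          apply Finset.sum_congr rfl; intro S hS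
          rw [← Finset.sum_sub_distrib]
          exact Finset.sum_congr rfl (fun T hT => hinner S hS T hT)
      _ = (2:ℝ)^n/4^m * ∑ S ∈ W, ∑ T ∈ W, (w S * w T) * ((2:ℝ)^((S ∩ T).card) - 1) := by
          rw [Finset.mul_sum]
          apply Finset.sum_congr rfl; intro S _
          rw [Finset.mul_sum]
      _ = (2:ℝ)^n/4^m *
            ∑ R ∈ (univ : Finset (Finset (Fin n))), (if R = ∅ then 0 else (G R)^2) := by
          congr 1
          have hind : ∀ S T : Finset (Fin n), (2:ℝ)^((S ∩ T).card) - 1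
              = ∑ R ∈ (univ : Finset (Finset (Fin n))),
                  (if R ⊆ S ∧ R ⊆ T ∧ R ≠ ∅ then (1:ℝ) else 0) := by
            intro S T
            rw [Finset.sum_boole]
            have hfil : (univ : Finset (Finset (Fin n))).filter
                  (fun R => R ⊆ S ∧ R ⊆ T ∧ R ≠ ∅)
                = ((S ∩ T).powerset).erase ∅ := by
              ext R
              simp only [mem_filter, mem_univ, true_and, mem_erase, mem_powerset,
                subset_inter_iff]
              tauto
            rw [hfil, card_erase_of_mem (empty_mem_powerset _), card_powerset]
            rw [Nat.cast_sub Nat.one_le_two_pow]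
            push_cast
            ring
          calc ∑ S ∈ W, ∑ T ∈ W, (w S * w T) * ((2:ℝ)^((S ∩ T).card) - 1)
              = ∑ S ∈ W, ∑ T ∈ W, ∑ R ∈ (univ : Finset (Finset (Fin n))),
                  (if R ⊆ S ∧ R ⊆ T ∧ R ≠ ∅ then w S * w T else 0) := by
                apply Finset.sum_congr rfl; intro S _
                apply Finset.sum_congr rfl; intro T _
                rw [hind S T, Finset.mul_sum]
                apply Finset.sum_congr rfl; intro R _
                by_cases hR : R ⊆ S ∧ R ⊆ T ∧ R ≠ ∅ <;> simp [hR]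
            _ = ∑ R ∈ (univ : Finset (Finset (Fin n))), ∑ S ∈ W, ∑ T ∈ W,
                  (if R ⊆ S ∧ R ⊆ T ∧ R ≠ ∅ then w S * w T else 0) := by
                rw [Finset.sum_congr rfl (fun S _ => Finset.sum_comm)]
                exact Finset.sum_comm
            _ = ∑ R ∈ (univ : Finset (Finset (Fin n))), (if R = ∅ then 0 else (G R)^2) := by
                apply Finset.sum_congr rfl; intro R _
                by_cases hR : R = ∅
                · subst hR; simp
                · rw [if_neg hR, hGdef]
                  simp only
                  rw [sq, Finset.sum_mul_sum]
                  apply Finset.sum_congr rfl; intro S _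
                  apply Finset.sum_congr rfl; intro T _
                  by_cases h1 : R ⊆ S <;> by_cases h2 : R ⊆ T <;> simp [h1, h2, hR]
  -- step 5
  have hmn : m ≤ n := by omega
  have hn' : (0:ℝ) < (n:ℝ) := by exact_mod_cast hn0
  have hfne : ((m.factorial : ℝ)) ≠ 0 := by positivity
  set K : ℝ := Mr^(2*m) * (n:ℝ)^(2*m-1) * (m:ℝ)^2 / (m.factorial:ℝ)^2 with hK
  have hK0 : 0 ≤ K := by positivity
  set x : ℝ := (m:ℝ)^2/(n:ℝ) with hxdef
  have hx0 : (0:ℝ) ≤ x := by positivity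
  have hm2n : ((m:ℝ))^2 ≤ (n:ℝ) := by
    have : m^2 ≤ n := le_trans (Nat.pow_le_pow_right (by omega) (by norm_num)) hm3
    exact_mod_cast this
  have hx1 : x ≤ 1 := by rw [hxdef, div_le_one hn']; exact hm2n
  have hgeo : ∑ j ∈ Icc 1 m, x^(j-1) ≤ 2 := by
    have hIcc : Icc 1 m = insert 1 (Icc 2 m) := by
      ext j; simp only [mem_Icc, mem_insert]; omega
    rw [hIcc, Finset.sum_insert (by simp)]
    have h2 : ∑ j ∈ Icc 2 m, x^(j-1) ≤ (m - 1 : ℕ) * x := by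
      calc ∑ j ∈ Icc 2 m, x^(j-1) ≤ ∑ _j ∈ Icc 2 m, x := by
            apply Finset.sum_le_sum
            intro j hj
            have hj2 : 2 ≤ j := (mem_Icc.mp hj).1
            exact pow_le_of_le_one hx0 hx1 (by omega)
        _ = (m - 1 : ℕ) * x := by
            rw [Finset.sum_const, nsmul_eq_mul, Nat.card_Icc,
              show m + 1 - 2 = m - 1 from by omega]
    have h3 : ((m - 1 : ℕ) : ℝ) * x ≤ 1 := by
      have hcast : ((m - 1 : ℕ) : ℝ) ≤ (m:ℝ) := by
        exact_mod_cast Nat.sub_le m 1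
      have : (m:ℝ) * x ≤ 1 := by
        rw [hxdef, mul_div_assoc']
        rw [div_le_one hn']
        have : (m:ℝ) * (m:ℝ)^2 = ((m^3 : ℕ) : ℝ) := by push_cast; ring
        rw [this]
        exact_mod_cast hm3
      calc ((m - 1 : ℕ) : ℝ) * x ≤ (m:ℝ) * x := by
            apply mul_le_mul_of_nonneg_right hcast hx0
        _ ≤ 1 := this
    norm_num
    linarith [h2, h3]
  have step5 : ∑ R ∈ (univ : Finset (Finset (Fin n))), (if R = ∅ then 0 else (G R)^2)
      ≤ 2 * (m:ℝ)^2 * (n:ℝ)^(2*m-1) * Mr^(2*m) / (m.factorial:ℝ)^2 := by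
    have hsplit : ∑ R ∈ (univ : Finset (Finset (Fin n))), (if R = ∅ then 0 else (G R)^2)
        = ∑ j ∈ Icc 1 m, ∑ R ∈ powersetCard j (univ : Finset (Fin n)),
            (if R = ∅ then 0 else (G R)^2) := by
      rw [← powerset_univ, Finset.sum_powerset, card_univ, Fintype.card_fin]
      apply (Finset.sum_subset ?_ ?_).symm
      · intro j hj
        simp only [mem_Icc] at hj
        simp only [mem_range]
        omega
      · intro j _ hj
        have hj' : j = 0 ∨ m < j := by
          simp only [mem_Icc] at hj; omega
        rcases hj' with hj0 | hjm
        · subst hj0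
          rw [Finset.powersetCard_zero, Finset.sum_singleton]
          simp
        · apply Finset.sum_eq_zero
          intro R hR
          have hRcard : R.card = j := (mem_powersetCard.mp hR).2
          have hG0 : G R = 0 := by
            rw [hGdef]
            apply Finset.sum_eq_zero
            intro S hS
            rw [if_neg]
            intro hRS
            have := card_le_card hRS
            rw [hRcard, hcardW S hS] at this
            omega
          by_cases hR0 : R = ∅
          · simp [hR0]
          · rw [if_neg hR0, hG0]
            norm_num
    have hjb : ∀ j ∈ Icc 1 m,
        (∑ R ∈ powersetCard j (univ : Finset (Fin n)), (if R = ∅ then 0 else (G R)^2))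
        ≤ (n.choose j : ℝ) * (Mr^m * (((n-j).choose (m-j) : ℕ) : ℝ))^2 := by
      intro j hj
      obtain ⟨hj1, hjm⟩ := mem_Icc.mp hj
      have hbnd : ∀ R ∈ powersetCard j (univ : Finset (Fin n)),
          (if R = ∅ then 0 else (G R)^2) ≤ (Mr^m * (((n-j).choose (m-j) : ℕ) : ℝ))^2 := by
        intro R hR
        have hRcard : R.card = j := (mem_powersetCard.mp hR).2
        have hGnn : 0 ≤ G R := by
          rw [hGdef]
          apply Finset.sum_nonneg
          intro S _
          by_cases hRS : R ⊆ S <;> simp [hRS, hw0 S]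
        have hGle : G R ≤ Mr^m * (((n-j).choose (m-j) : ℕ) : ℝ) := by
          rw [hGdef]
          simp only
          rw [← Finset.sum_filter]
          have hMrm : (0:ℝ) ≤ Mr^m := by positivity
          calc ∑ S ∈ W.filter (fun S => R ⊆ S), w S
              ≤ ∑ _S ∈ W.filter (fun S => R ⊆ S), Mr^m := by
                apply Finset.sum_le_sum
                intro S hS
                exact hwM S (Finset.filter_subset _ _ hS)
            _ = ((W.filter (fun S => R ⊆ S)).card : ℝ) * Mr^m := by
                rw [Finset.sum_const, nsmul_eq_mul]
            _ ≤ (((n-j).choose (m-j) : ℕ) : ℝ) * Mr^m := by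
                apply mul_le_mul_of_nonneg_right _ hMrm
                have := card_filter_superset_pc (m := m) R
                rw [hRcard] at this
                exact_mod_cast this
            _ = Mr^m * (((n-j).choose (m-j) : ℕ) : ℝ) := by ring
        have : (G R)^2 ≤ (Mr^m * (((n-j).choose (m-j) : ℕ) : ℝ))^2 :=
          pow_le_pow_left₀ hGnn hGle 2
        by_cases hR0 : R = ∅
        · rw [if_pos hR0]; positivity
        · rw [if_neg hR0]; exact this
      calc ∑ R ∈ powersetCard j (univ : Finset (Fin n)), (if R = ∅ then 0 else (G R)^2)
          ≤ ∑ _R ∈ powersetCard j (univ : Finset (Fin n)),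
              (Mr^m * (((n-j).choose (m-j) : ℕ) : ℝ))^2 := Finset.sum_le_sum hbnd
        _ = (n.choose j : ℝ) * (Mr^m * (((n-j).choose (m-j) : ℕ) : ℝ))^2 := by
            rw [Finset.sum_const, nsmul_eq_mul, card_powersetCard, card_univ, Fintype.card_fin]
    have hreal : ∀ j ∈ Icc 1 m,
        (n.choose j : ℝ) * (Mr^m * (((n-j).choose (m-j) : ℕ) : ℝ))^2 ≤ K * x^(j-1) := by
      intro j hj
      obtain ⟨hj1, hjm⟩ := mem_Icc.mp hj
      have hnat := nat_main n m j hm hj1 hjm hmn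
      have hcast : (n.choose j : ℝ) * (((n-j).choose (m-j) : ℕ) : ℝ)^2
            * (((m-1).factorial : ℕ) : ℝ)^2 * (n:ℝ)^(j-1)
          ≤ (n:ℝ)^(2*m-1) * (m:ℝ)^(2*(j-1)) := by
        exact_mod_cast hnat
      have hfac : (m.factorial : ℝ) = (m:ℝ) * (((m-1).factorial : ℕ) : ℝ) := by
        exact_mod_cast (Nat.mul_factorial_pred (by omega)).symm
      have hkey2 : (n.choose j : ℝ) * (((n-j).choose (m-j) : ℕ) : ℝ)^2
          ≤ (n:ℝ)^(2*m-1) * (m:ℝ)^2 * (m:ℝ)^(2*(j-1))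
            / ((m.factorial:ℝ)^2 * (n:ℝ)^(j-1)) := by
        rw [le_div_iff₀ (by positivity)]
        calc (n.choose j : ℝ) * (((n-j).choose (m-j) : ℕ) : ℝ)^2
              * ((m.factorial:ℝ)^2 * (n:ℝ)^(j-1))
            = ((n.choose j : ℝ) * (((n-j).choose (m-j) : ℕ) : ℝ)^2
                * (((m-1).factorial : ℕ) : ℝ)^2 * (n:ℝ)^(j-1)) * (m:ℝ)^2 := by
              rw [hfac]; ring
          _ ≤ ((n:ℝ)^(2*m-1) * (m:ℝ)^(2*(j-1))) * (m:ℝ)^2 := by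
              apply mul_le_mul_of_nonneg_right hcast (by positivity)
          _ = (n:ℝ)^(2*m-1) * (m:ℝ)^2 * (m:ℝ)^(2*(j-1)) := by ring
      have hMrsq : (Mr^m)^2 = Mr^(2*m) := by rw [← pow_mul, mul_comm]
      calc (n.choose j : ℝ) * (Mr^m * (((n-j).choose (m-j) : ℕ) : ℝ))^2
          = Mr^(2*m) * ((n.choose j : ℝ) * (((n-j).choose (m-j) : ℕ) : ℝ)^2) := by
            rw [mul_pow, ← hMrsq]; ring
        _ ≤ Mr^(2*m) * ((n:ℝ)^(2*m-1) * (m:ℝ)^2 * (m:ℝ)^(2*(j-1))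
              / ((m.factorial:ℝ)^2 * (n:ℝ)^(j-1))) := by
            apply mul_le_mul_of_nonneg_left hkey2 (by positivity)
        _ = K * x^(j-1) := by
            rw [hK, hxdef, div_pow, ← pow_mul]
            field_simp
    calc ∑ R ∈ (univ : Finset (Finset (Fin n))), (if R = ∅ then 0 else (G R)^2)
        = ∑ j ∈ Icc 1 m, ∑ R ∈ powersetCard j (univ : Finset (Fin n)),
            (if R = ∅ then 0 else (G R)^2) := hsplit
      _ ≤ ∑ j ∈ Icc 1 m, (n.choose j : ℝ) * (Mr^m * (((n-j).choose (m-j) : ℕ) : ℝ))^2 :=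
          Finset.sum_le_sum hjb
      _ ≤ ∑ j ∈ Icc 1 m, K * x^(j-1) := Finset.sum_le_sum hreal
      _ = K * ∑ j ∈ Icc 1 m, x^(j-1) := by rw [Finset.mul_sum]
      _ ≤ K * 2 := mul_le_mul_of_nonneg_left hgeo hK0
      _ = 2 * (m:ℝ)^2 * (n:ℝ)^(2*m-1) * Mr^(2*m) / (m.factorial:ℝ)^2 := by
          rw [hK]; ring
  -- conclusion
  have hgoal : ∑ A ∈ (univ : Finset (Finset (Fin n))),
      ((∑ S ∈ A.powersetCard m, ∏ i ∈ S, b i) -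
        (∑ B ∈ (univ : Finset (Finset (Fin n))), ∑ S ∈ B.powersetCard m, ∏ i ∈ S, b i)
          / (2:ℝ) ^ n) ^ 2
      = ∑ A ∈ (univ : Finset (Finset (Fin n))), (F A - C) ^ 2 := by
    apply Finset.sum_congr rfl
    intro A _
    rw [hF A, hC]
    rw [Finset.sum_congr rfl (fun B _ => hF B)]
  rw [hgoal, step4]
  apply mul_le_mul_of_nonneg_left step5 (by positivity)

/-- `Fam n l` is the family `F_{λ,n}` of all subsets of `{1,…,n}` of size at most `λ·n`. -/
noncomputable def Fam (n : ℕ) (l : ℝ) : Finset (Finset (Fin n)) :=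
  Finset.univ.filter (fun A => (A.card : ℝ) ≤ l * n)

/-- The `m`-th evaluation of the sequence `a` in `ℤ^k` on the subset `A`
(componentwise products); it is `0` when `|A| < m`. -/
def mthEvalVec (n k m : ℕ) (a : Fin n → Fin k → ℤ) (A : Finset (Fin n)) : Fin k → ℤ :=
  fun j => ∑ S ∈ A.powersetCard m, ∏ i ∈ S, a i j

open Finset in
theorem stmt8 (k m : ℕ) (hk : 1 ≤ k) (hm : 1 ≤ m) (l : ℝ) (hl0 : 1 / 2 < l) (hl : l ≤ 1)
    (ε : ℝ) (hε : 0 < ε) :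
    ∃ n₀ : ℕ, ∀ n : ℕ, n₀ ≤ n → ∀ M : ℤ, ∀ a : Fin n → Fin k → ℤ,
      (∀ i j, 0 ≤ a i j ∧ a i j ≤ M) →
      (∀ A₁ A₂ : Finset (Fin n), A₁ ∈ Fam n l → A₂ ∈ Fam n l → A₁ ≠ A₂ →
        m ≤ A₁.card → m ≤ A₂.card → mthEvalVec n k m a A₁ ≠ mthEvalVec n k m a A₂) →
      (∑ A ∈ Fam n l, ∑ j, ((mthEvalVec n k m a A j : ℝ) -
          (∑ B ∈ Fam n l, (mthEvalVec n k m a B j : ℝ)) / ((Fam n l).card : ℝ)) ^ 2) /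
        ((Fam n l).card : ℝ) ≤
      (1 + ε) * ((k : ℝ) * (2 * (m : ℝ) ^ 2 * l ^ (2 * m - 1) +
          2 * (m : ℝ) ^ 2 * l ^ (2 * m) + 1)) * (n : ℝ) ^ (2 * m - 1) *
        (M : ℝ) ^ (2 * m) / ((m.factorial : ℝ)) ^ 2 := by
  refine ⟨m^3 + 2*m, fun n hn M a hbound _ => ?_⟩
  have hm3 : m^3 ≤ n := by omega
  have h2m : 2*m ≤ n := by omega
  have hm1 : 1 ≤ m^3 := Nat.one_le_pow _ _ hm
  have hn0 : 0 < n := by omega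
  have hM : (0:ℤ) ≤ M := le_trans (hbound ⟨0, hn0⟩ ⟨0, hk⟩).1 (hbound ⟨0, hn0⟩ ⟨0, hk⟩).2
  have hMR : (0:ℝ) ≤ (M:ℝ) := by exact_mod_cast hM
  have hl2 : (0:ℝ) < l := by linarith
  set N := (Fam n l).card with hN
  have hNpos : 0 < N := by
    apply Finset.card_pos.mpr
    refine ⟨∅, ?_⟩
    rw [Fam, Finset.mem_filter]
    refine ⟨Finset.mem_univ _, ?_⟩
    rw [Finset.card_empty]
    push_cast
    positivity
  have hNR : (0:ℝ) < (N:ℝ) := by exact_mod_cast hNpos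
  -- 2^n ≤ 2 N
  have h2N : (2:ℕ)^n ≤ 2 * N := by
    classical
    have hsplit := Finset.card_filter_add_card_filter_not
      (s := (univ : Finset (Finset (Fin n)))) (p := fun A => ((A.card:ℝ) ≤ l * n))
    have hcardU : (univ : Finset (Finset (Fin n))).card = 2^n := by
      rw [card_univ, Fintype.card_finset, Fintype.card_fin]
    have hinj : ((univ : Finset (Finset (Fin n))).filter
        (fun A => ¬ ((A.card:ℝ) ≤ l * n))).card ≤ N := by
      rw [hN, Fam]
      apply Finset.card_le_card_of_injOn (fun A => Aᶜ)
      · intro A hA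
        simp only [Finset.mem_coe, Finset.mem_filter, Finset.mem_univ, true_and, not_le] at hA ⊢
        have hcc : (Aᶜ.card : ℝ) = (n : ℝ) - A.card := by
          rw [Finset.card_compl, Fintype.card_fin]
          have : A.card ≤ n := by simpa using card_le_card (subset_univ A)
          push_cast [Nat.cast_sub this]
          ring
        rw [hcc]
        have hnn : (0:ℝ) ≤ (n:ℝ) := Nat.cast_nonneg n
        nlinarith [hA]
      · intro A1 _ A2 _ h
        simpa using congrArg compl h
    have : (2:ℕ)^n ≤ N + N := by
      have hfam : ((univ : Finset (Finset (Fin n))).filter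
          (fun A => ((A.card:ℝ) ≤ l * n))).card = N := by
        rw [hN, Fam]
      omega
    omega
  have h2NR : (2:ℝ)^n / (N:ℝ) ≤ 2 := by
    rw [div_le_iff₀ hNR]
    have : ((2:ℕ)^n : ℝ) ≤ ((2*N : ℕ) : ℝ) := by exact_mod_cast h2N
    push_cast at this
    linarith
  -- per-coordinate bound
  set T : ℝ := 2 * (m:ℝ)^2 * (n:ℝ)^(2*m-1) * ((M:ℝ))^(2*m) / (m.factorial : ℝ)^2 with hT
  have hT0 : 0 ≤ T := by positivity
  have hperj : ∀ j : Fin k,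
      ∑ A ∈ Fam n l, ((mthEvalVec n k m a A j : ℝ) -
          (∑ B ∈ Fam n l, (mthEvalVec n k m a B j : ℝ)) / (N : ℝ)) ^ 2
      ≤ (2:ℝ)^n / 4^m * T := by
    intro j
    set f : Finset (Fin n) → ℝ := fun A => ((mthEvalVec n k m a A j : ℤ) : ℝ) with hf
    have hfval : ∀ A, f A = ∑ S ∈ A.powersetCard m, ∏ i ∈ S, ((a i j : ℤ) : ℝ) := by
      intro A
      rw [hf]
      simp only [mthEvalVec]
      push_cast
      rfl
    set C : ℝ := (∑ B ∈ (univ : Finset (Finset (Fin n))), f B) / 2^n with hCdef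
    calc ∑ A ∈ Fam n l, (f A - (∑ B ∈ Fam n l, f B) / (N : ℝ)) ^ 2
        ≤ ∑ A ∈ Fam n l, (f A - C) ^ 2 := sum_sq_dev_le _ hNR f C
      _ ≤ ∑ A ∈ (univ : Finset (Finset (Fin n))), (f A - C) ^ 2 := by
          apply Finset.sum_le_sum_of_subset_of_nonneg (subset_univ _)
          intro A _ _
          positivity
      _ ≤ (2:ℝ)^n / 4^m * T := by
          rw [hT]
          have := key_bound n m hm h2m hm3 ((M:ℝ)) (fun i => ((a i j : ℤ) : ℝ))
            (fun i => show (0:ℝ) ≤ ((a i j : ℤ) : ℝ) by exact_mod_cast (hbound i j).1)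
            (fun i => show ((a i j : ℤ) : ℝ) ≤ (M:ℝ) by exact_mod_cast (hbound i j).2)
          calc ∑ A ∈ (univ : Finset (Finset (Fin n))), (f A - C) ^ 2
              = ∑ A ∈ (univ : Finset (Finset (Fin n))),
                  ((∑ S ∈ A.powersetCard m, ∏ i ∈ S, ((a i j : ℤ) : ℝ)) -
                    (∑ B ∈ (univ : Finset (Finset (Fin n))),
                      ∑ S ∈ B.powersetCard m, ∏ i ∈ S, ((a i j : ℤ) : ℝ)) / (2:ℝ)^n) ^ 2 := by
                apply Finset.sum_congr rfl
                intro A _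
                rw [hCdef, hfval A, Finset.sum_congr rfl (fun B _ => hfval B)]
            _ ≤ _ := this
  -- sum over coordinates
  have hnum : (∑ A ∈ Fam n l, ∑ j, ((mthEvalVec n k m a A j : ℝ) -
      (∑ B ∈ Fam n l, (mthEvalVec n k m a B j : ℝ)) / (N : ℝ)) ^ 2)
      ≤ (k:ℝ) * ((2:ℝ)^n / 4^m * T) := by
    rw [Finset.sum_comm]
    calc ∑ j : Fin k, ∑ A ∈ Fam n l, ((mthEvalVec n k m a A j : ℝ) -
        (∑ B ∈ Fam n l, (mthEvalVec n k m a B j : ℝ)) / (N : ℝ)) ^ 2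
        ≤ ∑ _j : Fin k, (2:ℝ)^n / 4^m * T := Finset.sum_le_sum (fun j _ => hperj j)
      _ = (k:ℝ) * ((2:ℝ)^n / 4^m * T) := by
          rw [Finset.sum_const, nsmul_eq_mul, card_univ, Fintype.card_fin]
  -- final arithmetic
  have hmain : (k:ℝ) * ((2:ℝ)^n / 4^m * T) / (N:ℝ)
      ≤ (1 + ε) * ((k : ℝ) * (2 * (m : ℝ) ^ 2 * l ^ (2 * m - 1) +
          2 * (m : ℝ) ^ 2 * l ^ (2 * m) + 1)) * (n : ℝ) ^ (2 * m - 1) *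
        (M : ℝ) ^ (2 * m) / ((m.factorial : ℝ)) ^ 2 := by
    have h4 : (4:ℝ)^m = 2^(2*m) := by
      rw [show (4:ℝ) = 2^2 by norm_num, ← pow_mul]
    have h5 : (2:ℝ)^(2*m) = 2^(2*m-1) * 2 := by
      rw [← pow_succ]
      congr 1
      omega
    have q1 : (1/2:ℝ)^(2*m-1) = 2/4^m := by
      rw [one_div_pow, h4, h5]
      rw [div_eq_div_iff (by positivity) (by positivity)]
      ring
    have q2 : (1/2:ℝ)^(2*m) = 1/4^m := by
      rw [one_div_pow, h4]
    have hhalf : (1/2:ℝ) ≤ l := le_of_lt hl0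
    have p1 : (1/2:ℝ)^(2*m-1) ≤ l^(2*m-1) := pow_le_pow_left₀ (by norm_num) hhalf _
    have p2 : (1/2:ℝ)^(2*m) ≤ l^(2*m) := pow_le_pow_left₀ (by norm_num) hhalf _
    rw [q1] at p1
    rw [q2] at p2
    set coef : ℝ := 2 * (m : ℝ) ^ 2 * l ^ (2 * m - 1) + 2 * (m : ℝ) ^ 2 * l ^ (2 * m) + 1
      with hcoef
    have h4m : (0:ℝ) < 4^m := by positivity
    have hm2 : (0:ℝ) ≤ (m:ℝ)^2 := by positivity
    have hcoefge : 4 * (m:ℝ)^2 / 4^m ≤ coef := by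
      rw [hcoef]
      have e1 : 2 * (m:ℝ)^2 * (2/4^m) ≤ 2 * (m:ℝ)^2 * l^(2*m-1) := by
        apply mul_le_mul_of_nonneg_left p1 (by positivity)
      have e2 : (0:ℝ) ≤ 2 * (m:ℝ)^2 * l^(2*m) := by positivity
      have : 2 * (m:ℝ)^2 * (2/4^m) = 4 * (m:ℝ)^2 / 4^m := by ring
      linarith
    have hcoef0 : (0:ℝ) ≤ coef := le_trans (by positivity) hcoefge
    have hcoefeps : 4 * (m:ℝ)^2 / 4^m ≤ (1 + ε) * coef := by
      calc 4 * (m:ℝ)^2 / 4^m ≤ coef := hcoefge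
        _ = 1 * coef := (one_mul coef).symm
        _ ≤ (1 + ε) * coef := by
            apply mul_le_mul_of_nonneg_right _ hcoef0
            linarith
    set P : ℝ := (k:ℝ) * (n:ℝ)^(2*m-1) * ((M:ℝ))^(2*m) / (m.factorial : ℝ)^2 with hP
    have hP0 : 0 ≤ P := by positivity
    calc (k:ℝ) * ((2:ℝ)^n / 4^m * T) / (N:ℝ)
        = ((k:ℝ) * T / 4^m) * ((2:ℝ)^n / (N:ℝ)) := by ring
      _ ≤ ((k:ℝ) * T / 4^m) * 2 := by
          apply mul_le_mul_of_nonneg_left h2NR (by positivity)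
      _ = (4 * (m:ℝ)^2 / 4^m) * P := by rw [hT, hP]; ring
      _ ≤ ((1 + ε) * coef) * P := mul_le_mul_of_nonneg_right hcoefeps hP0
      _ = (1 + ε) * ((k : ℝ) * coef) * (n : ℝ) ^ (2 * m - 1) *
            (M : ℝ) ^ (2 * m) / ((m.factorial : ℝ)) ^ 2 := by rw [hP]; ring
  refine le_trans ?_ hmain
  gcongr
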